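/- Jet inversion is well defined and continuous on invertible k-jets: on the set J^k(E,F)^× = E × F × GL(E,F) × ∏_{j=2}^k L^j_sym(E;F), the map (x, y, p₁,…,p_k) ↦ (y, x, q₁,…,q_k) with q₁ = p₁⁻¹ and q_k defined recursively by q_k = −Σ_{j=1}^{k−1} Σ_{i₁+⋯+i_j = k, 1 ≤ i₁,…,i_j ≤ k} q_j(p_{i₁}∘q₁, …, p_{i_j}∘q₁), is continuous. -/

import Mathlib

open FormalMultilinearSeries Filter Topology

/-- The product topology on formal multilinear series (coefficient-wise convergence);
restricted to jets of order `≤ k` this is the usual norm topology on the jet space. -/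
noncomputable instance formalMultilinearSeriesTopology {E F : Type*}
    [NormedAddCommGroup E] [NormedSpace ℝ E] [NormedAddCommGroup F] [NormedSpace ℝ F] :
    TopologicalSpace (FormalMultilinearSeries ℝ E F) :=
  inferInstanceAs (TopologicalSpace (∀ n : ℕ, ContinuousMultilinearMap ℝ (fun _ : Fin n => E) F))

open FormalMultilinearSeries

namespace Composition

variable {E F G : Type*} [NormedAddCommGroup E] [NormedSpace ℝ E]
  [NormedAddCommGroup F] [NormedSpace ℝ F] [NormedAddCommGroup G] [NormedSpace ℝ G]
variable {n : ℕ} (c : Composition n)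

/-- Apply a family of multilinear maps blockwise along a composition. -/
def genApply
    (g : ∀ i : Fin c.length, ContinuousMultilinearMap ℝ (fun _ : Fin (c.blocksFun i) => E) F)
    (v : Fin n → E) (i : Fin c.length) : F :=
  g i (v ∘ c.embedding i)

theorem genApply_update_right
    (g : ∀ i : Fin c.length, ContinuousMultilinearMap ℝ (fun _ : Fin (c.blocksFun i) => E) F)
    (j : Fin n) (v : Fin n → E) (z : E) :
    c.genApply g (Function.update v j z) =
      Function.update (c.genApply g v) (c.index j)
        (g (c.index j)
          (Function.update (v ∘ c.embedding (c.index j)) (c.invEmbedding j) z)) := by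
  ext k
  by_cases h : k = c.index j
  · rw [h]
    let r : Fin (c.blocksFun (c.index j)) → Fin n := c.embedding (c.index j)
    simp only [Function.update_self]
    change g (c.index j) (Function.update v j z ∘ r) = _
    let j' := c.invEmbedding j
    suffices B : Function.update v j z ∘ r = Function.update (v ∘ r) j' z by rw [B]
    suffices C : Function.update v (r j') z ∘ r = Function.update (v ∘ r) j' z by
      convert C; exact (c.embedding_comp_inv j).symm
    exact Function.update_comp_eq_of_injective _ (c.embedding _).injective _ _
  · simp only [h, Function.update_eq_self, Function.update_of_ne, Ne, not_false_iff]
    let r : Fin (c.blocksFun k) → Fin n := c.embedding k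
    change g k (Function.update v j z ∘ r) = g k (v ∘ r)
    suffices B : Function.update v j z ∘ r = v ∘ r by rw [B]
    apply Function.update_comp_eq_of_notMem_range
    rwa [c.mem_range_embedding_iff']

theorem genApply_update_left [DecidableEq (Fin c.length)]
    (g : ∀ i : Fin c.length, ContinuousMultilinearMap ℝ (fun _ : Fin (c.blocksFun i) => E) F)
    (m : Fin c.length) (q : ContinuousMultilinearMap ℝ (fun _ : Fin (c.blocksFun m) => E) F)
    (v : Fin n → E) :
    c.genApply (Function.update g m q) v =
      Function.update (c.genApply g v) m (q (v ∘ c.embedding m)) := by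
  cases Subsingleton.elim ‹_› (instDecidableEqFin _)
  ext i
  rcases eq_or_ne i m with rfl | h
  · simp [genApply]
  · simp [genApply, h]

/-- Generalized `compAlongComposition` where each block gets its own multilinear map. -/
def genComp (f : ContinuousMultilinearMap ℝ (fun _ : Fin c.length => F) G)
    (g : ∀ i : Fin c.length, ContinuousMultilinearMap ℝ (fun _ : Fin (c.blocksFun i) => E) F) :
    ContinuousMultilinearMap ℝ (fun _ : Fin n => E) G where
  toFun v := f (c.genApply g v)
  map_update_add' v j x y := by
    cases Subsingleton.elim ‹_› (instDecidableEqFin _)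
    simp only [genApply_update_right, ContinuousMultilinearMap.map_update_add]
  map_update_smul' v j a x := by
    cases Subsingleton.elim ‹_› (instDecidableEqFin _)
    simp only [genApply_update_right, ContinuousMultilinearMap.map_update_smul]
  cont := f.cont.comp <| continuous_pi fun i =>
    (g i).cont.comp <| continuous_pi fun _ => continuous_apply _

@[simp] theorem genComp_apply (f : ContinuousMultilinearMap ℝ (fun _ : Fin c.length => F) G)
    (g : ∀ i : Fin c.length, ContinuousMultilinearMap ℝ (fun _ : Fin (c.blocksFun i) => E) F)
    (v : Fin n → E) : c.genComp f g v = f (c.genApply g v) := rfl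

theorem genComp_norm (f : ContinuousMultilinearMap ℝ (fun _ : Fin c.length => F) G)
    (g : ∀ i : Fin c.length, ContinuousMultilinearMap ℝ (fun _ : Fin (c.blocksFun i) => E) F) :
    ‖c.genComp f g‖ ≤ ‖f‖ * ∏ i, ‖g i‖ := by
  apply ContinuousMultilinearMap.opNorm_le_bound (by positivity) fun v => ?_
  calc ‖c.genComp f g v‖ = ‖f (c.genApply g v)‖ := rfl
    _ ≤ ‖f‖ * ∏ i, ‖c.genApply g v i‖ := ContinuousMultilinearMap.le_opNorm _ _
    _ ≤ ‖f‖ * ∏ i, ‖g i‖ * ∏ j : Fin (c.blocksFun i), ‖(v ∘ c.embedding i) j‖ := by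
      apply mul_le_mul_of_nonneg_left _ (norm_nonneg _)
      refine Finset.prod_le_prod (fun i _ => norm_nonneg _) fun i _ => ?_
      exact ContinuousMultilinearMap.le_opNorm _ _
    _ = (‖f‖ * ∏ i, ‖g i‖) * ∏ i, ∏ j : Fin (c.blocksFun i), ‖(v ∘ c.embedding i) j‖ := by
      rw [Finset.prod_mul_distrib, mul_assoc]
    _ = (‖f‖ * ∏ i, ‖g i‖) * ∏ i : Fin n, ‖v i‖ := by
      rw [← c.blocksFinEquiv.prod_comp, ← Finset.univ_sigma_univ, Finset.prod_sigma]
      congr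

/-- `genComp` is linear in `f` and multilinear in `g`. -/
def genCompₗ :
    ContinuousMultilinearMap ℝ (fun _ : Fin c.length => F) G →ₗ[ℝ]
      MultilinearMap ℝ
        (fun i : Fin c.length => ContinuousMultilinearMap ℝ (fun _ : Fin (c.blocksFun i) => E) F)
        (ContinuousMultilinearMap ℝ (fun _ : Fin n => E) G) where
  toFun f :=
    { toFun := fun g => c.genComp f g
      map_update_add' := by
        intro inst g m q q'
        cases Subsingleton.elim ‹_› (instDecidableEqFin _)
        ext v
        simp [genApply_update_left]
      map_update_smul' := by
        intro inst g m a q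
        cases Subsingleton.elim ‹_› (instDecidableEqFin _)
        ext v
        simp [genApply_update_left] }
  map_add' _ _ := rfl
  map_smul' _ _ := rfl

variable (E F G) in
/-- Bundled continuous version of `genComp`. -/
noncomputable def genCompL :
    ContinuousMultilinearMap ℝ (fun _ : Fin c.length => F) G →L[ℝ]
      ContinuousMultilinearMap ℝ
        (fun i : Fin c.length => ContinuousMultilinearMap ℝ (fun _ : Fin (c.blocksFun i) => E) F)
        (ContinuousMultilinearMap ℝ (fun _ : Fin n => E) G) :=
  MultilinearMap.mkContinuousLinear c.genCompₗ 1 fun f g => by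
    simp only [one_mul]; exact c.genComp_norm f g

theorem continuous_genComp :
    Continuous fun fg :
        (ContinuousMultilinearMap ℝ (fun _ : Fin c.length => F) G) ×
        (∀ i : Fin c.length, ContinuousMultilinearMap ℝ (fun _ : Fin (c.blocksFun i) => E) F) =>
      c.genComp fg.1 fg.2 :=
  (c.genCompL E F G).continuous_uncurry_of_multilinear

theorem genComp_eq_compAlongComposition (q : FormalMultilinearSeries ℝ F G)
    (p : FormalMultilinearSeries ℝ E F) :
    c.genComp (q c.length) (fun i => p (c.blocksFun i)) = q.compAlongComposition p c := by
  ext v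
  rfl

end Composition

/-- Joint continuity of `compContinuousLinearMap`. -/
theorem continuous_compCLM {ι : Type*} [Fintype ι] {E E₁ : ι → Type*}
    [∀ i, NormedAddCommGroup (E i)] [∀ i, NormedSpace ℝ (E i)]
    [∀ i, NormedAddCommGroup (E₁ i)] [∀ i, NormedSpace ℝ (E₁ i)]
    {G : Type*} [NormedAddCommGroup G] [NormedSpace ℝ G] :
    Continuous fun x : ContinuousMultilinearMap ℝ E₁ G × (∀ i, E i →L[ℝ] E₁ i) =>
      x.1.compContinuousLinearMap x.2 := by
  have h1 : Continuous fun f : ∀ i, E i →L[ℝ] E₁ i =>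
      ContinuousMultilinearMap.compContinuousLinearMapContinuousMultilinear ℝ E E₁ G f :=
    (ContinuousMultilinearMap.compContinuousLinearMapContinuousMultilinear ℝ E E₁ G).cont
  have h2 : Continuous fun x :
      (ContinuousMultilinearMap ℝ E₁ G →L[ℝ] ContinuousMultilinearMap ℝ E G) ×
        ContinuousMultilinearMap ℝ E₁ G => x.1 x.2 :=
    isBoundedBilinearMap_apply.continuous
  exact h2.comp ((h1.comp continuous_snd).prodMk continuous_fst)

set_option maxHeartbeats 1000000 in
/-- Jet inversion is well defined and continuous on the set of invertible
`k`-jets. A `k`-jet is represented as `(x, y, p)` with `p` a formal multilinear series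
vanishing in degree `0` and in degrees `> k`; it is invertible when its linear part `p₁`
is a continuous linear equivalence. Any map `Φ` that assigns to each invertible `k`-jet its
inverse jet `(y, x, q)` — characterized by `q₁ = p₁⁻¹` and the recursive Faà di Bruno
inversion relations, i.e. the truncated composition `q∘p` is the identity jet — is
continuous on this set. -/
theorem stmt_10 {E F : Type*} [NormedAddCommGroup E] [NormedSpace ℝ E]
    [NormedAddCommGroup F] [NormedSpace ℝ F]
    (k : ℕ) (hk : 1 ≤ k)
    (Φ : E × F × FormalMultilinearSeries ℝ E F → F × E × FormalMultilinearSeries ℝ F E)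
    (hΦ : ∀ σ ∈ {σ : E × F × FormalMultilinearSeries ℝ E F |
        σ.2.2 0 = 0 ∧ (∀ n, k < n → σ.2.2 n = 0) ∧
        ∃ e : E ≃L[ℝ] F, continuousMultilinearCurryFin1 ℝ E F (σ.2.2 1) = (e : E →L[ℝ] F)},
      (Φ σ).1 = σ.2.1 ∧ (Φ σ).2.1 = σ.1 ∧
      (Φ σ).2.2 0 = 0 ∧ (∀ n, k < n → (Φ σ).2.2 n = 0) ∧
      (continuousMultilinearCurryFin1 ℝ F E ((Φ σ).2.2 1)).comp
          (continuousMultilinearCurryFin1 ℝ E F (σ.2.2 1)) = ContinuousLinearMap.id ℝ E ∧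
      ∀ n, 2 ≤ n → n ≤ k → ((Φ σ).2.2).comp σ.2.2 n = 0) :
    ContinuousOn Φ {σ : E × F × FormalMultilinearSeries ℝ E F |
        σ.2.2 0 = 0 ∧ (∀ n, k < n → σ.2.2 n = 0) ∧
        ∃ e : E ≃L[ℝ] F, continuousMultilinearCurryFin1 ℝ E F (σ.2.2 1) = (e : E →L[ℝ] F)} := by
  classical
  set s : Set (E × F × FormalMultilinearSeries ℝ E F) :=
    {σ : E × F × FormalMultilinearSeries ℝ E F |
        σ.2.2 0 = 0 ∧ (∀ n, k < n → σ.2.2 n = 0) ∧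
        ∃ e : E ≃L[ℝ] F, continuousMultilinearCurryFin1 ℝ E F (σ.2.2 1) = (e : E →L[ℝ] F)}
    with hs
  set P : E × F × FormalMultilinearSeries ℝ E F → (E →L[ℝ] F) :=
    fun σ => continuousMultilinearCurryFin1 ℝ E F (σ.2.2 1) with hPdef
  set Q : E × F × FormalMultilinearSeries ℝ E F → (F →L[ℝ] E) :=
    fun σ => continuousMultilinearCurryFin1 ℝ F E ((Φ σ).2.2 1) with hQdef
  have hPcont : Continuous P :=
    (continuousMultilinearCurryFin1 ℝ E F).continuous.comp
      ((continuous_apply 1).comp (continuous_snd.comp continuous_snd))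
  have hQP : ∀ σ ∈ s, (Q σ).comp (P σ) = ContinuousLinearMap.id ℝ E :=
    fun σ hσ => (hΦ σ hσ).2.2.2.2.1
  have hPQ : ∀ σ ∈ s, (P σ).comp (Q σ) = ContinuousLinearMap.id ℝ F := by
    intro σ hσ
    obtain ⟨e, he⟩ := hσ.2.2
    have hq : ∀ y, Q σ y = e.symm y := by
      intro y
      have h1 := ContinuousLinearMap.ext_iff.1 (hQP σ hσ) (e.symm y)
      simp only [ContinuousLinearMap.comp_apply, ContinuousLinearMap.id_apply] at h1
      rw [show P σ = (e : E →L[ℝ] F) from he] at h1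
      simpa using h1
    ext y
    simp only [ContinuousLinearMap.comp_apply, ContinuousLinearMap.id_apply, hq y]
    rw [show P σ = (e : E →L[ℝ] F) from he]
    simp
  -- continuity of the inverse linear part
  have hQcont : ContinuousOn Q s := by
    intro σ₀ hσ₀
    have bound : ∀ σ ∈ s, ‖Q σ - Q σ₀‖ ≤ ‖Q σ‖ * ‖P σ - P σ₀‖ * ‖Q σ₀‖ := by
      intro σ hσ
      refine ContinuousLinearMap.opNorm_le_bound _ (by positivity) fun y => ?_
      have e1 : P σ₀ (Q σ₀ y) = y := by
        have := ContinuousLinearMap.ext_iff.1 (hPQ σ₀ hσ₀) y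
        simpa using this
      have e2 : Q σ (P σ (Q σ₀ y)) = Q σ₀ y := by
        have := ContinuousLinearMap.ext_iff.1 (hQP σ hσ) (Q σ₀ y)
        simpa using this
      have key : Q σ ((P σ₀ - P σ) (Q σ₀ y)) = Q σ y - Q σ₀ y := by
        rw [ContinuousLinearMap.sub_apply, map_sub, e1, e2]
      calc ‖(Q σ - Q σ₀) y‖ = ‖Q σ ((P σ₀ - P σ) (Q σ₀ y))‖ := by
            rw [ContinuousLinearMap.sub_apply, key]
        _ ≤ ‖Q σ‖ * ‖(P σ₀ - P σ) (Q σ₀ y)‖ := ContinuousLinearMap.le_opNorm _ _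
        _ ≤ ‖Q σ‖ * (‖P σ₀ - P σ‖ * ‖Q σ₀ y‖) := by
            gcongr
            exact ContinuousLinearMap.le_opNorm _ _
        _ ≤ ‖Q σ‖ * (‖P σ₀ - P σ‖ * (‖Q σ₀‖ * ‖y‖)) := by
            gcongr
            exact ContinuousLinearMap.le_opNorm _ _
        _ = ‖Q σ‖ * ‖P σ - P σ₀‖ * ‖Q σ₀‖ * ‖y‖ := by rw [norm_sub_rev]; ring
    have hP0 : Tendsto (fun σ => ‖P σ - P σ₀‖) (𝓝[s] σ₀) (𝓝 0) :=
      tendsto_iff_norm_sub_tendsto_zero.1 ((hPcont.tendsto σ₀).mono_left nhdsWithin_le_nhds)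
    have hδ : (0 : ℝ) < (2 * (‖Q σ₀‖ + 1))⁻¹ := by positivity
    refine tendsto_iff_norm_sub_tendsto_zero.2 (squeeze_zero'
      (Eventually.of_forall fun σ => norm_nonneg _)
      (g := fun σ => 2 * ‖Q σ₀‖ ^ 2 * ‖P σ - P σ₀‖) ?_ ?_)
    · filter_upwards [self_mem_nhdsWithin, hP0.eventually (gt_mem_nhds hδ)] with σ hσ hlt
      have hb := bound σ hσ
      have hQn : ‖Q σ‖ ≤ ‖Q σ₀‖ + ‖Q σ - Q σ₀‖ := by
        calc ‖Q σ‖ = ‖Q σ₀ + (Q σ - Q σ₀)‖ := by congr 1; abel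
          _ ≤ ‖Q σ₀‖ + ‖Q σ - Q σ₀‖ := norm_add_le _ _
      have ha : ‖P σ - P σ₀‖ * (2 * (‖Q σ₀‖ + 1)) < 1 := by
        have h2 : (0 : ℝ) < 2 * (‖Q σ₀‖ + 1) := by positivity
        calc ‖P σ - P σ₀‖ * (2 * (‖Q σ₀‖ + 1))
            < (2 * (‖Q σ₀‖ + 1))⁻¹ * (2 * (‖Q σ₀‖ + 1)) := by
              exact mul_lt_mul_of_pos_right hlt h2
          _ = 1 := inv_mul_cancel₀ (ne_of_gt h2)
      nlinarith [norm_nonneg (P σ - P σ₀), norm_nonneg (Q σ - Q σ₀), norm_nonneg (Q σ₀),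
        mul_nonneg (norm_nonneg (P σ - P σ₀)) (norm_nonneg (Q σ - Q σ₀)),
        mul_le_mul_of_nonneg_right hQn (mul_nonneg (norm_nonneg (P σ - P σ₀)) (norm_nonneg (Q σ₀)))]
    · simpa using hP0.const_mul (2 * ‖Q σ₀‖ ^ 2)
  -- continuity of each coefficient of the inverse jet
  have main : ∀ n : ℕ, ContinuousOn (fun σ => (Φ σ).2.2 n) s := by
    intro n
    induction n using Nat.strong_induction_on with
    | _ n IH =>
      rcases Nat.eq_zero_or_pos n with rfl | hn0
      · exact continuousOn_const.congr fun σ hσ => (hΦ σ hσ).2.2.1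
      rcases lt_or_ge k n with hkn | hnk
      · exact continuousOn_const.congr fun σ hσ => (hΦ σ hσ).2.2.2.1 n hkn
      rcases eq_or_lt_of_le (Nat.succ_le_of_lt hn0) with h1 | h2n
      · -- n = 1
        subst_eqs
        have hrepr : ∀ σ, (Φ σ).2.2 1 = (continuousMultilinearCurryFin1 ℝ F E).symm (Q σ) :=
          fun σ => ((continuousMultilinearCurryFin1 ℝ F E).symm_apply_apply _).symm
        exact ((continuousMultilinearCurryFin1 ℝ F E).symm.continuous.comp_continuousOn
          hQcont).congr fun σ _ => hrepr σ
      -- 2 ≤ n ≤ k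
      have h2n' : 2 ≤ n := h2n
      set T : E × F × FormalMultilinearSeries ℝ E F →
          ContinuousMultilinearMap ℝ (fun _ : Fin n => E) E :=
        fun σ => -(∑ c ∈ Finset.univ.erase (Composition.ones n),
          ((Φ σ).2.2).compAlongComposition σ.2.2 c) with hTdef
      have hTcont : ContinuousOn T s := by
        refine ContinuousOn.neg (continuousOn_finset_sum _ fun c hc => ?_)
        have hlen : c.length < n :=
          lt_of_le_of_ne c.length_le
            (fun h => (Finset.ne_of_mem_erase hc) (Composition.eq_ones_iff_length.2 h))
        have h1 : ContinuousOn (fun σ : E × F × FormalMultilinearSeries ℝ E F =>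
            ((Φ σ).2.2 c.length,
              fun i : Fin c.length => σ.2.2 (c.blocksFun i))) s :=
          (IH _ hlen).prodMk (continuousOn_pi.2 fun i =>
            ((continuous_apply (c.blocksFun i)).comp
              (continuous_snd.comp continuous_snd)).continuousOn)
        exact ((c.continuous_genComp.comp_continuousOn h1).congr
          fun σ _ => (c.genComp_eq_compAlongComposition _ _).symm).congr
          fun σ _ => (c.genComp_eq_compAlongComposition _ _)
      have heq : ∀ σ ∈ s, (Φ σ).2.2 n =
          (T σ).compContinuousLinearMap (fun _ : Fin n => Q σ) := by
        intro σ hσ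
        have hcomp : ((Φ σ).2.2).comp σ.2.2 n = 0 := (hΦ σ hσ).2.2.2.2.2 n h2n' hnk
        have hsum : ∑ c : Composition n, ((Φ σ).2.2).compAlongComposition σ.2.2 c = 0 := hcomp
        ext v
        simp only [ContinuousMultilinearMap.compContinuousLinearMap_apply]
        have hzero : ∑ c : Composition n,
            (((Φ σ).2.2).compAlongComposition σ.2.2 c) (fun i => Q σ (v i)) = 0 := by
          rw [← ContinuousMultilinearMap.sum_apply, hsum]
          rfl
        have hTw : T σ (fun i => Q σ (v i)) =
            (((Φ σ).2.2).compAlongComposition σ.2.2 (Composition.ones n))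
              (fun i => Q σ (v i)) := by
          have h := Finset.sum_erase_add Finset.univ
            (fun c => (((Φ σ).2.2).compAlongComposition σ.2.2 c) (fun i => Q σ (v i)))
            (Finset.mem_univ (Composition.ones n))
          have h0 := h.trans hzero
          simp only [hTdef, ContinuousMultilinearMap.neg_apply,
            ContinuousMultilinearMap.sum_apply]
          simpa using neg_eq_of_add_eq_zero_right h0
        have hcur : ∀ x : E, σ.2.2 1 (fun _ => x) = P σ x := by
          intro x
          have h : (fun _ : Fin 1 => x) = Fin.snoc (0 : (i : Fin 0) → E) x := by
            funext j
            simp [Fin.snoc]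
          rw [h, hPdef, continuousMultilinearCurryFin1_apply]
        have hones : (((Φ σ).2.2).compAlongComposition σ.2.2 (Composition.ones n))
            (fun i => Q σ (v i)) = (Φ σ).2.2 n v := by
          rw [FormalMultilinearSeries.compAlongComposition_apply]
          simp only [FormalMultilinearSeries.applyComposition_ones]
          refine FormalMultilinearSeries.congr _ (Composition.ones_length n)
            fun i him hin => ?_
          have hidx : (Fin.castLE (Composition.length_le _)
              (⟨i, him⟩ : Fin (Composition.ones n).length)) = ⟨i, hin⟩ := by
            ext; simp
          rw [hidx]
          have hPQ' : P σ (Q σ (v ⟨i, hin⟩)) = v ⟨i, hin⟩ := by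
            have := ContinuousLinearMap.ext_iff.1 (hPQ σ hσ) (v ⟨i, hin⟩)
            simpa using this
          rw [hcur, hPQ']
        rw [hTw, hones]
      have hcont2 : ContinuousOn (fun σ =>
          (T σ).compContinuousLinearMap (fun _ : Fin n => Q σ)) s :=
        continuous_compCLM.comp_continuousOn
          (hTcont.prodMk (continuousOn_pi.2 fun _ => hQcont))
      exact hcont2.congr heq
  refine ContinuousOn.prodMk ?_ (ContinuousOn.prodMk ?_ ?_)
  · exact (continuous_fst.comp continuous_snd).continuousOn.congr fun σ hσ => (hΦ σ hσ).1
  · exact continuous_fst.continuousOn.congr fun σ hσ => (hΦ σ hσ).2.1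
  · exact continuousOn_pi.2 main
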